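/- Let X be a compact Kähler manifold (or smooth projective variety) of dimension d, f an automorphism with f* unipotent on H^{1,1}(X,ℝ), ω a Kähler (resp. ample) class, N = f* − Id with N^{k+1} = 0. Then the function n ↦ (Σ_{i=0}^{n} (f^i)*ω)^d (the top self-intersection number of Δ_n(f,ω)) is a polynomial in n of degree at most d + max{ Σ_{j=1}^d i_j : i_j ≥ 0 and (N^{i_1}ω)·(N^{i_2}ω)⋯(N^{i_d}ω) ≠ 0 }, and of degree at least d (since the constant-in-ω term ω^d > 0 contributes n^d · ω^d after expansion). -/
import Mathlib

open Polynomial Finset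

/-- hockey stick -/
lemma aux_hockey (n j : ℕ) :
    ∑ i ∈ Finset.range (n + 1), (i.choose j) = (n + 1).choose (j + 1) := by
  induction n with
  | zero =>
    cases j <;> simp [Nat.choose_eq_zero_of_lt]
  | succ n ih =>
    rw [Finset.sum_range_succ, ih, Nat.choose_succ_succ (n + 1) j]
    exact Nat.add_comm _ _

/-- descending factorial as real product -/
lemma aux_descFact (n k : ℕ) :
    ∏ r ∈ Finset.range k, ((n : ℝ) - r) = (n.descFactorial k : ℝ) := by
  induction k with
  | zero => simp
  | succ k ih =>
    rw [Finset.prod_range_succ, ih, Nat.descFactorial_succ]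
    by_cases h : k ≤ n
    · push_cast [Nat.cast_sub h]
      ring
    · rw [Nat.descFactorial_eq_zero_iff_lt.2 (by omega)]
      simp

/-- the binomial polynomial of degree j+1, evaluating at n to (n+1).choose (j+1) -/
noncomputable def auxQ (j : ℕ) : Polynomial ℝ :=
  C (((j + 1).factorial : ℝ)⁻¹) * ∏ r ∈ Finset.range (j + 1), (X + C (1 - (r : ℝ)))

lemma auxQ_eval (j n : ℕ) : (auxQ j).eval (n : ℝ) = ((n + 1).choose (j + 1) : ℝ) := by
  have h1 : (∏ r ∈ Finset.range (j + 1), (X + C (1 - (r : ℝ)))).eval (n : ℝ)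
      = ∏ r ∈ Finset.range (j + 1), (((n : ℝ) + 1) - r) := by
    rw [Polynomial.eval_prod]
    refine Finset.prod_congr rfl fun r _ => ?_
    simp [sub_eq_add_neg]; ring
  have h2 : ∏ r ∈ Finset.range (j + 1), (((n : ℝ) + 1) - r)
      = ((n + 1).descFactorial (j + 1) : ℝ) := by
    have := aux_descFact (n + 1) (j + 1)
    push_cast at this ⊢
    convert this using 2
  rw [auxQ, Polynomial.eval_mul, Polynomial.eval_C, h1, h2,
    Nat.descFactorial_eq_factorial_mul_choose]
  push_cast
  rw [← mul_assoc, inv_mul_cancel₀ (by positivity), one_mul]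

lemma auxQ_natDegree_le (j : ℕ) : (auxQ j).natDegree ≤ j + 1 := by
  have h1 : (∏ r ∈ Finset.range (j + 1), (X + C (1 - (r : ℝ)))).natDegree ≤ j + 1 := by
    refine le_trans (Polynomial.natDegree_prod_le _ _) ?_
    have : ∀ r ∈ Finset.range (j+1), (X + C (1 - (r:ℝ))).natDegree ≤ 1 :=
      fun r _ => le_of_eq (Polynomial.natDegree_X_add_C _)
    exact le_trans (Finset.sum_le_sum this) (by simp)
  calc (auxQ j).natDegree ≤ (C (((j + 1).factorial : ℝ)⁻¹)).natDegree
        + (∏ r ∈ Finset.range (j + 1), (X + C (1 - (r : ℝ)))).natDegree :=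
      Polynomial.natDegree_mul_le
    _ ≤ j + 1 := by rw [Polynomial.natDegree_C, zero_add]; exact h1

lemma auxQ_dvd (j : ℕ) : (X + 1 : Polynomial ℝ) ∣ auxQ j := by
  refine Dvd.dvd.mul_left ?_ _
  have h0 : (X + 1 : Polynomial ℝ) = X + C (1 - ((0 : ℕ) : ℝ)) := by simp
  rw [h0]
  exact Finset.dvd_prod_of_mem _ (Finset.mem_range.2 (Nat.succ_pos j))

/-- Abstract form of Lemma 3.5: with `A = f*` unipotent (`N = A − Id`, `N^{k+1} = 0`),
`ω` with `ω^d > 0`, `n ↦ (Σ_{i=0}^{n} Aⁱω)^d` is a polynomial in `n` of degree at most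
`d + max{Σ i_j : (N^{i₁}ω)⋯(N^{i_d}ω) ≠ 0}` and at least `d`. -/
theorem stmt13 {V : Type*} [AddCommGroup V] [Module ℝ V] [FiniteDimensional ℝ V]
    {d : ℕ} (hd : 1 ≤ d)
    (inter : MultilinearMap ℝ (fun _ : Fin d => V) ℝ)
    (A : V →ₗ[ℝ] V) (ω : V) (k : ℕ)
    (hnil : (A - LinearMap.id) ^ (k + 1) = 0)
    (hω : 0 < inter (fun _ => ω))
    (m : ℕ)
    (hm : ∀ ι : Fin d → ℕ,
      inter (fun t => (((A - LinearMap.id : V →ₗ[ℝ] V)) ^ (ι t)) ω) ≠ 0 → ∑ t : Fin d, ι t ≤ m) :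
    ∃ P : Polynomial ℝ,
      (∀ n : ℕ, P.eval (n : ℝ) = inter (fun _ => ∑ i ∈ Finset.range (n + 1), (A ^ i) ω)) ∧
      P.natDegree ≤ d + m ∧ d ≤ P.natDegree := by
  set N : V →ₗ[ℝ] V := A - LinearMap.id with hN
  -- N^j ω = 0 for j ≥ k+1
  have hNz : ∀ j : ℕ, k + 1 ≤ j → (N ^ j) ω = 0 := by
    intro j hj
    obtain ⟨r, rfl⟩ := Nat.exists_eq_add_of_le hj
    rw [pow_add, hnil, zero_mul, LinearMap.zero_apply]
  have hA1 : A = N + 1 := by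
    rw [hN]; exact (sub_add_cancel A 1).symm
  have hc : Commute N (1 : V →ₗ[ℝ] V) := Commute.one_right N
  have hApow : ∀ i : ℕ,
      (A ^ i) ω = ∑ j ∈ Finset.range (i + 1), ((i.choose j : ℝ)) • ((N ^ j) ω) := by
    intro i
    rw [hA1, hc.add_pow]
    rw [LinearMap.sum_apply]
    refine Finset.sum_congr rfl fun j hj => ?_
    rw [one_pow, mul_one, ← nsmul_eq_mul', LinearMap.smul_apply,
      ← Nat.cast_smul_eq_nsmul ℝ]
  have hApow2 : ∀ i : ℕ,
      (A ^ i) ω = ∑ j ∈ Finset.range (k + 1), ((i.choose j : ℝ)) • ((N ^ j) ω) := by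
    intro i
    have h1 : (∑ j ∈ Finset.range (i + 1), ((i.choose j : ℝ)) • ((N ^ j) ω))
        = ∑ j ∈ Finset.range (i + k + 2), ((i.choose j : ℝ)) • ((N ^ j) ω) := by
      refine Finset.sum_subset (Finset.range_subset_range.2 (by omega)) ?_
      intro j _ hj
      simp only [Finset.mem_range, not_lt] at hj
      rw [Nat.choose_eq_zero_of_lt (by omega), Nat.cast_zero, zero_smul]
    have h2 : (∑ j ∈ Finset.range (k + 1), ((i.choose j : ℝ)) • ((N ^ j) ω))
        = ∑ j ∈ Finset.range (i + k + 2), ((i.choose j : ℝ)) • ((N ^ j) ω) := by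
      refine Finset.sum_subset (Finset.range_subset_range.2 (by omega)) ?_
      intro j _ hj
      simp only [Finset.mem_range, not_lt] at hj
      rw [hNz j (by omega), smul_zero]
    rw [hApow i, h1, ← h2]
  -- the partial sums Δ_n in terms of binomial coefficients
  have hDelta : ∀ n : ℕ,
      (∑ i ∈ Finset.range (n + 1), (A ^ i) ω)
        = ∑ j ∈ Finset.range (k + 1), (((n + 1).choose (j + 1) : ℝ)) • ((N ^ j) ω) := by
    intro n
    calc (∑ i ∈ Finset.range (n + 1), (A ^ i) ω)
        = ∑ i ∈ Finset.range (n + 1), ∑ j ∈ Finset.range (k + 1),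
            ((i.choose j : ℝ)) • ((N ^ j) ω) := Finset.sum_congr rfl fun i _ => hApow2 i
      _ = ∑ j ∈ Finset.range (k + 1), ∑ i ∈ Finset.range (n + 1),
            ((i.choose j : ℝ)) • ((N ^ j) ω) := Finset.sum_comm
      _ = ∑ j ∈ Finset.range (k + 1), (((n + 1).choose (j + 1) : ℝ)) • ((N ^ j) ω) := by
          refine Finset.sum_congr rfl fun j _ => ?_
          rw [← Finset.sum_smul, ← Nat.cast_sum, aux_hockey n j]
  set P : Polynomial ℝ := ∑ ι ∈ Fintype.piFinset (fun _ : Fin d => Finset.range (k + 1)),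
      C (inter fun t => (N ^ ι t) ω) * ∏ t : Fin d, auxQ (ι t) with hPdef
  have hEval : ∀ n : ℕ,
      P.eval (n : ℝ) = inter (fun _ => ∑ i ∈ Finset.range (n + 1), (A ^ i) ω) := by
    intro n
    rw [hDelta n]
    rw [inter.map_sum_finset
      (fun (_ : Fin d) (j : ℕ) => (((n + 1).choose (j + 1) : ℝ)) • ((N ^ j) ω))
      (fun _ : Fin d => Finset.range (k + 1))]
    rw [hPdef, Polynomial.eval_finset_sum]
    refine Finset.sum_congr rfl fun ι _ => ?_
    rw [Polynomial.eval_mul, Polynomial.eval_C, Polynomial.eval_prod]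
    have hq : ∀ t : Fin d, (auxQ (ι t)).eval (n : ℝ) = (((n + 1).choose (ι t + 1) : ℝ)) :=
      fun t => auxQ_eval (ι t) n
    rw [Finset.prod_congr rfl fun t _ => hq t]
    rw [inter.map_smul_univ]
    rw [smul_eq_mul, mul_comm]
  refine ⟨P, hEval, ?_, ?_⟩
  · -- upper degree bound
    rw [hPdef]
    refine Polynomial.natDegree_sum_le_of_forall_le _ _ fun ι hι => ?_
    by_cases hc0 : inter (fun t => (N ^ ι t) ω) = 0
    · rw [hc0, map_zero, zero_mul, Polynomial.natDegree_zero]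
      exact Nat.zero_le _
    · have hsum : ∑ t : Fin d, ι t ≤ m := hm ι hc0
      calc (C (inter fun t => (N ^ ι t) ω) * ∏ t : Fin d, auxQ (ι t)).natDegree
          ≤ (C (inter fun t => (N ^ ι t) ω)).natDegree
            + (∏ t : Fin d, auxQ (ι t)).natDegree := Polynomial.natDegree_mul_le
        _ ≤ 0 + ∑ t : Fin d, (auxQ (ι t)).natDegree := by
            rw [Polynomial.natDegree_C]
            exact add_le_add le_rfl (Polynomial.natDegree_prod_le _ _)
        _ ≤ ∑ t : Fin d, (ι t + 1) := by
            rw [zero_add]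
            exact Finset.sum_le_sum fun t _ => auxQ_natDegree_le (ι t)
        _ = (∑ t : Fin d, ι t) + d := by
            rw [Finset.sum_add_distrib, Finset.sum_const, Finset.card_univ,
              Fintype.card_fin, smul_eq_mul, mul_one]
        _ ≤ d + m := by omega
  · -- lower degree bound
    have hP0 : P.eval ((0 : ℕ) : ℝ) = inter (fun _ => ω) := by
      rw [hEval 0]
      congr 1
      funext t
      rw [Finset.sum_range_one, pow_zero, Module.End.one_apply]
    have hPne : P ≠ 0 := by
      intro h
      rw [h] at hP0
      simp only [Polynomial.eval_zero] at hP0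
      rw [← hP0] at hω
      exact lt_irrefl _ hω
    have hdvd : (X + 1 : Polynomial ℝ) ^ d ∣ P := by
      rw [hPdef]
      refine Finset.dvd_sum fun ι _ => Dvd.dvd.mul_left ?_ _
      have h1 : (X + 1 : Polynomial ℝ) ^ d = ∏ _t : Fin d, (X + 1 : Polynomial ℝ) := by
        rw [Finset.prod_const, Finset.card_univ, Fintype.card_fin]
      rw [h1]
      exact Finset.prod_dvd_prod_of_dvd _ _ fun t _ => auxQ_dvd (ι t)
    obtain ⟨R, hR⟩ := hdvd
    have hXd : ((X + 1 : Polynomial ℝ) ^ d).natDegree = d := by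
      rw [Polynomial.natDegree_pow]
      have h2 : (X + 1 : Polynomial ℝ) = X + C 1 := by rw [map_one]
      rw [h2, Polynomial.natDegree_X_add_C, mul_one]
    have hX1 : (X + 1 : Polynomial ℝ) ≠ 0 := by
      intro h
      have h3 := congrArg (Polynomial.eval (0 : ℝ)) h
      simp at h3
    have hXne : (X + 1 : Polynomial ℝ) ^ d ≠ 0 := pow_ne_zero _ hX1
    have hRne : R ≠ 0 := by
      intro h
      rw [h, mul_zero] at hR
      exact hPne hR
    rw [hR, Polynomial.natDegree_mul hXne hRne, hXd]
    omega
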